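/- arXiv:1810.12495 — 4 statements merged into one kernel-verified Lean document; each statement's English description precedes it below -/
import Mathlib

section
/- If f is continuous, positive and nondecreasing on (0,∞), F(τ) = ∫₀^τ f(s) ds, H(τ) = ((k+1)F(τ))^{1/(k+1)} for an integer k ≥ 1, and Φ(s) = ∫_s^∞ dτ/H(τ) is finite for all s > 0, then lim_{t→∞} F(t)^{k/(k+1)} / f(t) = 0. -/
open Set Filter MeasureTheory

theorem stmt0 (k : ℕ) (hk : 1 ≤ k) (f F H : ℝ → ℝ)
    (hfc : ContinuousOn f (Ioi 0))
    (hfpos : ∀ s, 0 < s → 0 < f s)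
    (hfmono : MonotoneOn f (Ioi 0))
    (hF : ∀ τ, F τ = ∫ s in (0:ℝ)..τ, f s)
    (hH : ∀ τ, H τ = (((k:ℝ) + 1) * F τ) ^ ((1:ℝ)/((k:ℝ)+1)))
    (hΦ : ∀ s, 0 < s → IntegrableOn (fun τ => 1 / H τ) (Ioi s)) :
    Tendsto (fun t => (F t) ^ ((k:ℝ)/((k:ℝ)+1)) / f t) atTop (nhds 0) := by
  have hk1 : (0:ℝ) < (k:ℝ) + 1 := by positivity
  -- integrability of f on Ioc a b for 0 ≤ a
  have hfIoc : ∀ a b : ℝ, 0 ≤ a → IntegrableOn f (Ioc a b) := by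
    intro a b ha
    rcases le_or_gt b a with h | h
    · simp [Ioc_eq_empty (not_lt.mpr h)]
    · have hb : (0:ℝ) < b := lt_of_le_of_lt ha h
      have hsub : Ioc a b ⊆ Ioi 0 := fun x hx => lt_of_le_of_lt ha hx.1
      have hmeas : AEStronglyMeasurable f (volume.restrict (Ioc a b)) :=
        (hfc.mono hsub).aestronglyMeasurable measurableSet_Ioc
      have : IntegrableOn f univ (volume.restrict (Ioc a b)) := by
        refine Measure.integrableOn_of_bounded (M := f b) ?_ hmeas ?_
        · rw [Measure.restrict_apply_univ]; exact measure_Ioc_lt_top.ne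
        · rw [Measure.restrict_univ]
          filter_upwards [ae_restrict_mem measurableSet_Ioc] with x hx
          rw [Real.norm_eq_abs, abs_of_pos (hfpos x (lt_of_le_of_lt ha hx.1))]
          exact hfmono (mem_Ioi.mpr (lt_of_le_of_lt ha hx.1)) (mem_Ioi.mpr hb) hx.2
      rw [integrableOn_univ] at this
      exact this
  have hfint : ∀ a b : ℝ, 0 ≤ a → a ≤ b → IntervalIntegrable f volume a b :=
    fun a b ha hab => (intervalIntegrable_iff_integrableOn_Ioc_of_le hab).mpr (hfIoc a b ha)
  -- F b - F a = ∫_a^b f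
  have hFsub : ∀ a b : ℝ, 0 ≤ a → a ≤ b → F b - F a = ∫ x in a..b, f x := by
    intro a b ha hab
    rw [hF, hF]
    exact intervalIntegral.integral_interval_sub_left (hfint 0 b le_rfl (ha.trans hab))
      (hfint 0 a le_rfl ha)
  have hFstrict : ∀ a b : ℝ, 0 ≤ a → a < b → F a < F b := by
    intro a b ha hab
    have h := hFsub a b ha hab.le
    have hpos : 0 < ∫ x in a..b, f x :=
      intervalIntegral.intervalIntegral_pos_of_pos_on (hfint a b ha hab.le)
        (fun x hx => hfpos x (lt_of_le_of_lt ha hx.1)) hab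
    linarith
  have hFle : ∀ a b : ℝ, 0 ≤ a → a ≤ b → F a ≤ F b := by
    intro a b ha hab
    rcases eq_or_lt_of_le hab with rfl | h
    · exact le_rfl
    · exact (hFstrict a b ha h).le
  have hF0 : F 0 = 0 := by rw [hF]; simp
  have hFpos : ∀ t : ℝ, 0 < t → 0 < F t := by
    intro t ht
    have := hFstrict 0 t le_rfl ht
    linarith
  -- F is differentiable hence continuous on Ioi 0
  have hFderiv : ∀ x : ℝ, 0 < x → HasDerivAt F (f x) x := by
    intro x hx
    have h1 : IntervalIntegrable f volume 0 x := hfint 0 x le_rfl hx.le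
    have h2 := hfc.stronglyMeasurableAtFilter (μ := volume) isOpen_Ioi x hx
    have h3 : ContinuousAt f x := hfc.continuousAt (Ioi_mem_nhds hx)
    have h4 := intervalIntegral.integral_hasDerivAt_right h1 h2 h3
    have hFeq : F = fun u => ∫ s in (0:ℝ)..u, f s := funext hF
    rw [hFeq]
    exact h4
  have hFcont : ContinuousOn F (Ioi 0) :=
    fun x hx => ((hFderiv x hx).continuousAt).continuousWithinAt
  -- F tends to infinity
  have hFtop : Tendsto F atTop atTop := by
    have haff : Tendsto (fun t : ℝ => F 1 + f 1 * (t - 1)) atTop atTop := by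
      apply tendsto_atTop_add_const_left
      exact Tendsto.const_mul_atTop (hfpos 1 one_pos)
        (tendsto_atTop_add_const_right _ _ tendsto_id)
    refine tendsto_atTop_mono' atTop ?_ haff
    filter_upwards [eventually_ge_atTop (1:ℝ)] with t ht
    have hsub := hFsub 1 t zero_le_one ht
    have hmono := intervalIntegral.integral_mono_on ht intervalIntegrable_const
      (hfint 1 t zero_le_one ht)
      (fun x hx => hfmono (mem_Ioi.mpr one_pos)
        (mem_Ioi.mpr (lt_of_lt_of_le one_pos hx.1)) hx.1)
    rw [intervalIntegral.integral_const, smul_eq_mul] at hmono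
    linarith [mul_comm (f 1) (t - 1)]
  -- H positivity
  have hHpos : ∀ τ : ℝ, 0 < τ → 0 < H τ := by
    intro τ hτ
    rw [hH]
    exact Real.rpow_pos_of_pos (mul_pos hk1 (hFpos τ hτ)) _
  -- tail integral tends to 0
  set Φ : ℝ → ℝ := fun M => ∫ τ in Ioi M, 1 / H τ with hΦdef
  have hΦtend : Tendsto Φ atTop (nhds 0) := by
    have hint1 : IntegrableOn (fun τ => 1 / H τ) (Ioi 1) := hΦ 1 one_pos
    have h2 : Tendsto (fun M : ℝ => ∫ τ in (1:ℝ)..M, 1 / H τ) atTop (nhds (Φ 1)) :=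
      intervalIntegral_tendsto_integral_Ioi 1 hint1 tendsto_id
    have h3 : ∀ᶠ M in atTop, Φ 1 - ∫ τ in (1:ℝ)..M, 1 / H τ = Φ M := by
      filter_upwards [eventually_ge_atTop (1:ℝ)] with M hM
      have hsplit : Φ 1 = (∫ τ in Ioc 1 M, 1 / H τ) + Φ M := by
        rw [hΦdef]
        rw [← setIntegral_union (Ioc_disjoint_Ioi le_rfl) measurableSet_Ioi
          (hint1.mono_set Ioc_subset_Ioi_self) (hΦ M (by linarith)),
          Ioc_union_Ioi_eq_Ioi hM]
      rw [intervalIntegral.integral_of_le hM]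
      linarith
    have h4 : Tendsto (fun M : ℝ => Φ 1 - ∫ τ in (1:ℝ)..M, 1 / H τ) atTop
        (nhds (Φ 1 - Φ 1)) := tendsto_const_nhds.sub h2
    rw [sub_self] at h4
    exact h4.congr' h3
  -- main ε argument
  rw [Metric.tendsto_atTop]
  intro ε hε
  set C : ℝ := 2 * ((k:ℝ) + 1) ^ ((1:ℝ)/((k:ℝ)+1)) with hC
  have hBpos : (0:ℝ) < ((k:ℝ) + 1) ^ ((1:ℝ)/((k:ℝ)+1)) := Real.rpow_pos_of_pos hk1 _
  have hCpos : 0 < C := by rw [hC]; positivity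
  obtain ⟨M, hMε, hM1⟩ :=
    ((hΦtend.eventually_lt_const (show (0:ℝ) < ε / C by positivity)).and
      (eventually_ge_atTop (1:ℝ))).exists
  have hM0 : (0:ℝ) < M := lt_of_lt_of_le one_pos hM1
  obtain ⟨N, hN⟩ := eventually_atTop.mp
    ((hFtop.eventually_gt_atTop (2 * F M)).and (eventually_ge_atTop (M + 1)))
  refine ⟨N, fun s hs => ?_⟩
  obtain ⟨hFs2, hsM⟩ := hN s hs
  have hMs : M < s := by linarith
  have hs0 : (0:ℝ) < s := by linarith
  have hFspos := hFpos s hs0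
  have hFMpos := hFpos M hM0
  have hfspos := hfpos s hs0
  -- find t with F t = F s / 2
  have hmem : F s / 2 ∈ Ioo (F M) (F s) := ⟨by linarith, by linarith⟩
  obtain ⟨t, htmem, htF⟩ := intermediate_value_Ioo hMs.le
    (hFcont.mono (fun x hx => lt_of_lt_of_le hM0 hx.1)) hmem
  have ht0 : (0:ℝ) < t := hM0.trans htmem.1
  -- step (a): F s / 2 ≤ f s * (s - t)
  have hstep1 : F s - F t ≤ f s * (s - t) := by
    rw [hFsub t s ht0.le htmem.2.le]
    calc ∫ x in t..s, f x ≤ ∫ x in t..s, f s :=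
          intervalIntegral.integral_mono_on htmem.2.le (hfint t s ht0.le htmem.2.le)
            intervalIntegrable_const
            (fun x hx => hfmono (mem_Ioi.mpr (lt_of_lt_of_le ht0 hx.1))
              (mem_Ioi.mpr hs0) hx.2)
      _ = f s * (s - t) := by rw [intervalIntegral.integral_const, smul_eq_mul, mul_comm]
  have h1' : F s / (2 * f s) ≤ s - t := by
    rw [div_le_iff₀ (by positivity)]
    linarith [hstep1, htF, (by ring : (s - t) * (2 * f s) = 2 * (f s * (s - t)))]
  -- step (b): lower bound for Φ M
  set c : ℝ := 1 / ((((k:ℝ) + 1) * F s) ^ ((1:ℝ)/((k:ℝ)+1))) with hc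
  have hXpos : (0:ℝ) < (((k:ℝ) + 1) * F s) ^ ((1:ℝ)/((k:ℝ)+1)) :=
    Real.rpow_pos_of_pos (mul_pos hk1 hFspos) _
  have hcpos : 0 < c := by rw [hc]; positivity
  have hb1 : c * (s - t) ≤ ∫ τ in Ioc t s, 1 / H τ := by
    have hmono := setIntegral_ge_of_const_le (c := c) measurableSet_Ioc measure_Ioc_lt_top.ne
      (fun τ hτ => by
        have hτ0 : (0:ℝ) < τ := ht0.trans hτ.1
        have hle : H τ ≤ (((k:ℝ) + 1) * F s) ^ ((1:ℝ)/((k:ℝ)+1)) := by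
          rw [hH]
          exact Real.rpow_le_rpow (mul_nonneg hk1.le (hFpos τ hτ0).le)
            (mul_le_mul_of_nonneg_left (hFle τ s hτ0.le hτ.2) hk1.le) (by positivity)
        exact one_div_le_one_div_of_le (hHpos τ hτ0) hle)
      ((hΦ M hM0).mono_set (fun x hx => mem_Ioi.mpr (htmem.1.trans hx.1)))
    rwa [measureReal_def, Real.volume_Ioc, ENNReal.toReal_ofReal (sub_nonneg.mpr htmem.2.le),
      smul_eq_mul, mul_comm] at hmono
  have hb2 : (∫ τ in Ioc t s, 1 / H τ) ≤ Φ M := by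
    refine setIntegral_mono_set (hΦ M hM0) ?_ ?_
    · filter_upwards [ae_restrict_mem measurableSet_Ioi] with τ hτ
      have := hHpos τ (hM0.trans hτ)
      positivity
    · exact HasSubset.Subset.eventuallyLE (fun x hx => mem_Ioi.mpr (htmem.1.trans hx.1))
  have h2 : c * (F s / (2 * f s)) ≤ Φ M :=
    le_trans (mul_le_mul_of_nonneg_left h1' hcpos.le) (hb1.trans hb2)
  -- algebra
  have hA : (0:ℝ) < F s ^ ((1:ℝ)/((k:ℝ)+1)) := Real.rpow_pos_of_pos hFspos _
  have hFpow : F s ^ ((k:ℝ)/((k:ℝ)+1)) * F s ^ ((1:ℝ)/((k:ℝ)+1)) = F s := by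
    rw [← Real.rpow_add hFspos]
    rw [show (k:ℝ)/((k:ℝ)+1) + 1/((k:ℝ)+1) = 1 by field_simp]
    exact Real.rpow_one _
  have hP : F s ^ ((k:ℝ)/((k:ℝ)+1)) = F s / F s ^ ((1:ℝ)/((k:ℝ)+1)) := by
    rw [eq_div_iff hA.ne']
    exact hFpow
  have halg : c * (F s / (2 * f s)) = F s ^ ((k:ℝ)/((k:ℝ)+1)) / f s / C := by
    rw [hP, hc, hC, Real.mul_rpow hk1.le hFspos.le]
    field_simp
    all_goals first | exact Or.inl (by ring) | ring
  rw [halg] at h2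
  have hnn : 0 ≤ F s ^ ((k:ℝ)/((k:ℝ)+1)) / f s := by positivity
  rw [Real.dist_eq, sub_zero, abs_of_nonneg hnn]
  calc F s ^ ((k:ℝ)/((k:ℝ)+1)) / f s
      = F s ^ ((k:ℝ)/((k:ℝ)+1)) / f s / C * C := by field_simp
    _ < ε / C * C := mul_lt_mul_of_pos_right (lt_of_le_of_lt h2 hMε) hCpos
    _ = ε := by field_simp
end

section
/- Let f be continuous, positive and nondecreasing on (0,∞), F(τ) = ∫₀^τ f, H(τ) = ((k+1)F(τ))^{1/(k+1)}, and assume Φ(s) = ∫_s^∞ dτ/H(τ) < ∞ for s > 0 and that C_f = lim_{s→∞} H'(s)·Φ(s) exists. Then C_f ≥ 1. -/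
open Set Filter MeasureTheory

theorem stmt5 (k : ℕ) (hk : 1 ≤ k) (f F H Φ : ℝ → ℝ) (Cf : ℝ)
    (hf : ContDiffOn ℝ 1 f (Ioi 0))
    (hfpos : ∀ s, 0 < s → 0 < f s)
    (hfmono : MonotoneOn f (Ioi 0))
    (hF : ∀ τ, F τ = ∫ s in (0:ℝ)..τ, f s)
    (hH : ∀ τ, H τ = (((k:ℝ) + 1) * F τ) ^ ((1:ℝ)/((k:ℝ)+1)))
    (hΦint : ∀ s, 0 < s → IntegrableOn (fun τ => 1 / H τ) (Ioi s))
    (hΦ : ∀ s, 0 < s → Φ s = ∫ τ in Ioi s, 1 / H τ)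
    (hCf : Tendsto (fun s => deriv H s * Φ s) atTop (nhds Cf)) :
    1 ≤ Cf := by
  by_contra hlt
  push_neg at hlt
  have hkpos : (0:ℝ) < (k:ℝ) + 1 := by positivity
  have hfc : ContinuousOn f (Ioi 0) := hf.continuousOn
  -- interval integrability of f
  have hfint : ∀ τ : ℝ, 0 < τ → IntervalIntegrable f volume 0 τ := by
    intro τ hτ
    rw [intervalIntegrable_iff_integrableOn_Ioc_of_le hτ.le]
    have hmeas : AEStronglyMeasurable f (volume.restrict (Ioc 0 τ)) :=
      (hfc.mono Ioc_subset_Ioi_self).aestronglyMeasurable measurableSet_Ioc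
    refine Integrable.mono' (integrable_const (f τ)) hmeas ?_
    filter_upwards [ae_restrict_mem measurableSet_Ioc] with x hx
    rw [Real.norm_eq_abs, abs_of_pos (hfpos x hx.1)]
    exact hfmono hx.1 hτ hx.2
  -- F positive
  have hFpos : ∀ τ : ℝ, 0 < τ → 0 < F τ := by
    intro τ hτ
    rw [hF τ]
    have h2 : (0:ℝ) < τ/2 := by linarith
    have hsplit : (∫ s in (0:ℝ)..τ, f s) = (∫ s in (0:ℝ)..(τ/2), f s) + ∫ s in (τ/2)..τ, f s :=
      (intervalIntegral.integral_add_adjacent_intervals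
        ((hfint τ hτ).mono_set (by rw [uIcc_of_le h2.le, uIcc_of_le hτ.le]; exact Icc_subset_Icc le_rfl (by linarith)))
        ((hfint τ hτ).mono_set (by rw [uIcc_of_le (by linarith : τ/2 ≤ τ), uIcc_of_le hτ.le]; exact Icc_subset_Icc h2.le le_rfl))).symm
    rw [hsplit]
    have h1 : 0 ≤ ∫ s in (0:ℝ)..(τ/2), f s := by
      rw [intervalIntegral.integral_of_le h2.le]
      apply setIntegral_nonneg measurableSet_Ioc
      intro x hx; exact (hfpos x hx.1).le
    have h2' : (τ/2) * f (τ/2) ≤ ∫ s in (τ/2)..τ, f s := by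
      have : (∫ s in (τ/2)..τ, f (τ/2)) ≤ ∫ s in (τ/2)..τ, f s := by
        apply intervalIntegral.integral_mono_on (by linarith) intervalIntegrable_const
          ((hfint τ hτ).mono_set (by rw [uIcc_of_le (by linarith : τ/2 ≤ τ), uIcc_of_le hτ.le]; exact Icc_subset_Icc h2.le le_rfl))
        intro x hx
        rcases eq_or_lt_of_le hx.1 with h | h
        · rw [← h]
        · exact hfmono h2 (h2.trans h) h.le
      have hc : (∫ _ in (τ/2)..τ, f (τ/2)) = (τ - τ/2) * f (τ/2) := by
        simp [smul_eq_mul]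
      nlinarith [this, hfpos _ h2]
    have := hfpos _ h2
    nlinarith
  -- F has derivative f on Ioi 0
  have hFderiv : ∀ s : ℝ, 0 < s → HasDerivAt F (f s) s := by
    intro s hs
    have hFeq : F = fun τ => ∫ u in (0:ℝ)..τ, f u := funext hF
    rw [hFeq]
    exact intervalIntegral.integral_hasDerivAt_right (hfint s hs)
      (hfc.stronglyMeasurableAtFilter isOpen_Ioi s hs)
      (hfc.continuousAt (Ioi_mem_nhds hs))
  -- H positive
  have hHpos : ∀ s : ℝ, 0 < s → 0 < H s := by
    intro s hs
    have := hFpos s hs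
    rw [hH s]
    positivity
  -- H derivative
  have hHderiv : ∀ s : ℝ, 0 < s → HasDerivAt H (deriv H s) s := by
    intro s hs
    have hb : ((k:ℝ)+1) * F s ≠ 0 := by have := hFpos s hs; positivity
    have h1 := (((hFderiv s hs).const_mul ((k:ℝ)+1)).rpow_const
      (p := (1:ℝ)/((k:ℝ)+1)) (Or.inl hb))
    have hHeq : H = fun τ => (((k:ℝ) + 1) * F τ) ^ ((1:ℝ)/((k:ℝ)+1)) := funext hH
    rw [hHeq] at *
    rw [h1.deriv]
    exact h1
  have hHcont : ContinuousOn H (Ioi 0) := fun s hs =>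
    (hHderiv s hs).continuousAt.continuousWithinAt
  have hHicont : ContinuousOn (fun τ => 1 / H τ) (Ioi 0) := fun s hs =>
    continuousWithinAt_const.div (hHcont s hs) (hHpos s hs).ne'
  have hΦnonneg : ∀ s : ℝ, 0 < s → 0 ≤ Φ s := by
    intro s hs
    rw [hΦ s hs]
    apply setIntegral_nonneg measurableSet_Ioi
    intro x hx
    have := hHpos x (hs.trans hx)
    positivity
  have hΦderiv : ∀ s : ℝ, 0 < s → HasDerivAt Φ (-(1/H s)) s := by
    intro s hs
    set a := s/2 with ha
    have hapos : 0 < a := by positivity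
    have has : a < s := by rw [ha]; linarith
    have hint : ∀ x, a < x → IntervalIntegrable (fun τ => 1/H τ) volume a x := by
      intro x hx
      rw [intervalIntegrable_iff_integrableOn_Ioc_of_le hx.le]
      exact (hΦint a hapos).mono_set Ioc_subset_Ioi_self
    have heq : ∀ x, a < x → Φ x = Φ a - ∫ t in a..x, 1/H t := by
      intro x hx
      have hxpos : 0 < x := hapos.trans hx
      have hdisj : Disjoint (Ioc a x) (Ioi x) := by
        rw [Set.disjoint_left]; intro t ht ht'; exact absurd ht.2 (not_le.mpr ht')
      have hunion : Ioc a x ∪ Ioi x = Ioi a := Ioc_union_Ioi_eq_Ioi hx.le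
      have hsum := setIntegral_union hdisj measurableSet_Ioi
        ((hΦint a hapos).mono_set Ioc_subset_Ioi_self) (hΦint x hxpos)
        (f := fun τ => 1/H τ)
      rw [hunion] at hsum
      rw [hΦ x hxpos, hΦ a hapos, hsum, intervalIntegral.integral_of_le hx.le]
      ring
    have hd : HasDerivAt (fun x => Φ a - ∫ t in a..x, 1/H t) (-(1/H s)) s := by
      have h0 := intervalIntegral.integral_hasDerivAt_right (hint s has)
        (hHicont.stronglyMeasurableAtFilter isOpen_Ioi s hs)
        (hHicont.continuousAt (Ioi_mem_nhds hs))
      simpa using (h0.const_sub (Φ a))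
    apply hd.congr_of_eventuallyEq
    filter_upwards [Ioi_mem_nhds has] with x hx using heq x hx
  -- the combined function
  set c : ℝ := (1 - Cf)/2 with hc
  have hcpos : 0 < c := by rw [hc]; linarith
  have hGderiv : ∀ s : ℝ, 0 < s →
      HasDerivAt (fun x => H x * Φ x + c * x) (deriv H s * Φ s - 1 + c) s := by
    intro s hs
    have h1 := ((hHderiv s hs).mul (hΦderiv s hs)).add ((hasDerivAt_id s).const_mul c)
    refine h1.congr_deriv ?_
    rw [mul_neg, mul_one_div_cancel (hHpos s hs).ne']
    ring
  have hev : ∀ᶠ s in atTop, deriv H s * Φ s ≤ Cf + c :=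
    hCf.eventually (eventually_le_nhds (by linarith))
  obtain ⟨s₀, hs₀⟩ := eventually_atTop.1 (hev.and (eventually_gt_atTop 0))
  have hant : AntitoneOn (fun x => H x * Φ x + c * x) (Ici s₀) := by
    apply antitoneOn_of_deriv_nonpos (convex_Ici s₀)
    · intro x hx
      exact ((hGderiv x (hs₀ x hx).2).continuousAt).continuousWithinAt
    · intro x hx
      rw [interior_Ici] at hx
      exact (hGderiv x (hs₀ x (le_of_lt hx)).2).differentiableAt.differentiableWithinAt
    · intro x hx
      rw [interior_Ici] at hx
      rw [(hGderiv x (hs₀ x (le_of_lt hx)).2).deriv]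
      have h2 := (hs₀ x (le_of_lt hx)).1
      rw [hc] at *
      linarith
  set M : ℝ := H s₀ * Φ s₀ + c * s₀ with hM
  set x : ℝ := max s₀ ((M+1)/c) with hx
  have hxs : s₀ ≤ x := le_max_left _ _
  have hxpos : 0 < x := (hs₀ x hxs).2
  have h1 : H x * Φ x + c * x ≤ M := hant self_mem_Ici (mem_Ici.mpr hxs) hxs
  have h2 : 0 ≤ H x * Φ x := mul_nonneg (hHpos x hxpos).le (hΦnonneg x hxpos)
  have h3 : (M+1)/c ≤ x := le_max_right _ _
  have h4 : M + 1 ≤ x * c := (div_le_iff₀ hcpos).mp h3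
  nlinarith
end

section
/- Suppose additionally that C_f = lim_{s→∞} H'(s) ∫_s^∞ dτ/H(τ) exists with C_f > 0. Then lim_{t→0⁺} (−φ'(t))/(t·φ''(t)) = 1/C_f, equivalently lim_{t→0⁺} ((k+1)F(φ(t)))^{k/(k+1)} / (t·f(φ(t))) = 1/C_f. -/
open Set Filter MeasureTheory

theorem stmt8 (k : ℕ) (hk : 1 ≤ k) (f F H Φ φ : ℝ → ℝ) (Cf : ℝ)
    (hf : ContDiffOn ℝ 1 f (Ioi 0))
    (hfpos : ∀ s, 0 < s → 0 < f s)
    (hfmono : MonotoneOn f (Ioi 0))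
    (hF : ∀ τ, F τ = ∫ s in (0:ℝ)..τ, f s)
    (hH : ∀ τ, H τ = (((k:ℝ) + 1) * F τ) ^ ((1:ℝ)/((k:ℝ)+1)))
    (hΦint : ∀ s, 0 < s → IntegrableOn (fun τ => 1 / H τ) (Ioi s))
    (hΦ : ∀ s, 0 < s → Φ s = ∫ τ in Ioi s, 1 / H τ)
    (hφpos : ∀ t, 0 < t → 0 < φ t)
    (hφ : ∀ t, 0 < t → Φ (φ t) = t)
    (hCfpos : 0 < Cf)
    (hCf : Tendsto (fun s => deriv H s * Φ s) atTop (nhds Cf)) :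
    Tendsto (fun t => (((k:ℝ) + 1) * F (φ t)) ^ ((k:ℝ)/((k:ℝ)+1)) / (t * f (φ t)))
      (nhdsWithin 0 (Ioi 0)) (nhds (1 / Cf)) := by
  have hfc : ContinuousOn f (Ioi 0) := hf.continuousOn
  -- interval integrability of f
  have hint : ∀ b : ℝ, 0 < b → IntervalIntegrable f volume 0 b := by
    intro b hb
    rw [intervalIntegrable_iff_integrableOn_Ioc_of_le hb.le]
    refine ⟨(hfc.mono Ioc_subset_Ioi_self).aestronglyMeasurable measurableSet_Ioc,
      HasFiniteIntegral.restrict_of_bounded (C := f b) ?_ ?_⟩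
    · simp [Real.volume_Ioc]
    · filter_upwards [ae_restrict_mem measurableSet_Ioc] with x hx
      rw [Real.norm_eq_abs, abs_of_pos (hfpos x hx.1)]
      exact hfmono hx.1 hb hx.2
  -- derivative of F
  have hFderiv : ∀ s, 0 < s → HasDerivAt F (f s) s := by
    intro s hs
    have hFun : F = fun τ => ∫ u in (0:ℝ)..τ, f u := funext hF
    rw [hFun]
    exact intervalIntegral.integral_hasDerivAt_right (hint s hs)
      (hfc.stronglyMeasurableAtFilter isOpen_Ioi s hs)
      (hfc.continuousAt (Ioi_mem_nhds hs))
  -- positivity of F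
  have hFpos : ∀ s, 0 < s → 0 < F s := by
    intro s hs
    rw [hF]
    apply intervalIntegral.intervalIntegral_pos_of_pos_on (hint s hs) _ hs
    intro x hx
    exact hfpos x hx.1
  have hApos : ∀ s, 0 < s → 0 < ((k:ℝ)+1) * F s := by
    intro s hs
    exact mul_pos (by positivity) (hFpos s hs)
  -- derivative of H
  have hHderiv : ∀ s, 0 < s →
      HasDerivAt H ((((k:ℝ)+1) * F s) ^ ((1:ℝ)/((k:ℝ)+1) - 1) * f s) s := by
    intro s hs
    have hA : 0 < ((k:ℝ)+1) * F s := hApos s hs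
    have h1 : HasDerivAt (fun τ => ((k:ℝ)+1) * F τ) (((k:ℝ)+1) * f s) s :=
      (hFderiv s hs).const_mul _
    have h2 := (Real.hasDerivAt_rpow_const
      (p := (1:ℝ)/((k:ℝ)+1)) (x := ((k:ℝ)+1) * F s) (Or.inl hA.ne')).comp s h1
    have hFun : H = fun τ => (((k:ℝ)+1) * F τ) ^ ((1:ℝ)/((k:ℝ)+1)) := funext hH
    rw [hFun]
    convert h2 using 1
    have hk1 : ((k:ℝ)+1) ≠ 0 := by positivity
    case e'_9 =>
      field_simp
    all_goals rfl
  -- positivity of H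
  have hHpos : ∀ s, 0 < s → 0 < H s := by
    intro s hs
    rw [hH]
    exact Real.rpow_pos_of_pos (hApos s hs) _
  -- Φ is antitone on positives
  have hΦanti : ∀ a b : ℝ, 0 < a → a ≤ b → Φ b ≤ Φ a := by
    intro a b ha hab
    rw [hΦ a ha, hΦ b (lt_of_lt_of_le ha hab)]
    apply setIntegral_mono_set (hΦint a ha)
    · filter_upwards [ae_restrict_mem measurableSet_Ioi] with x hx
      have := hHpos x (lt_trans ha hx)
      positivity
    · exact HasSubset.Subset.eventuallyLE (Ioi_subset_Ioi hab)
  -- Φ is positive on positives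
  have hΦpos : ∀ s, 0 < s → 0 < Φ s := by
    intro s hs
    rw [hΦ s hs]
    rw [setIntegral_pos_iff_support_of_nonneg_ae]
    · have hsupp : Function.support (fun τ => 1 / H τ) ∩ Ioi s = Ioi s := by
        rw [inter_eq_right]
        intro x hx
        have := hHpos x (lt_trans hs hx)
        simp [Function.mem_support]
        positivity
      rw [hsupp, Real.volume_Ioi]
      simp
    · filter_upwards [ae_restrict_mem measurableSet_Ioi] with x hx
      have := hHpos x (lt_trans hs hx)
      positivity
    · exact hΦint s hs
  -- φ tends to infinity
  have hφtop : Tendsto φ (nhdsWithin 0 (Ioi 0)) atTop := by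
    rw [tendsto_atTop]
    intro M
    have hM1 : (0:ℝ) < max M 1 := lt_of_lt_of_le one_pos (le_max_right M 1)
    filter_upwards [Ioo_mem_nhdsGT_of_mem ⟨le_refl (0:ℝ), hΦpos (max M 1) hM1⟩]
      with t ht
    by_contra hc
    push_neg at hc
    have hle : φ t ≤ max M 1 := le_trans hc.le (le_max_left M 1)
    have := hΦanti (φ t) (max M 1) (hφpos t ht.1) hle
    rw [hφ t ht.1] at this
    exact absurd (lt_of_lt_of_le ht.2 this) (lt_irrefl t)
  -- compose
  have key : Tendsto (fun t => deriv H (φ t) * Φ (φ t)) (nhdsWithin 0 (Ioi 0))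
      (nhds Cf) := hCf.comp hφtop
  have key2 : Tendsto (fun t => (deriv H (φ t) * Φ (φ t))⁻¹) (nhdsWithin 0 (Ioi 0))
      (nhds Cf⁻¹) := key.inv₀ hCfpos.ne'
  rw [show (1:ℝ)/Cf = Cf⁻¹ from one_div Cf]
  apply key2.congr'
  filter_upwards [self_mem_nhdsWithin] with t ht
  have htpos : (0:ℝ) < t := ht
  have hx : 0 < φ t := hφpos t htpos
  have hA : 0 < ((k:ℝ)+1) * F (φ t) := hApos (φ t) hx
  have hd : deriv H (φ t) = (((k:ℝ)+1) * F (φ t)) ^ ((1:ℝ)/((k:ℝ)+1) - 1) * f (φ t) :=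
    (hHderiv (φ t) hx).deriv
  have hq : (1:ℝ)/((k:ℝ)+1) - 1 = -((k:ℝ)/((k:ℝ)+1)) := by
    have hk1 : ((k:ℝ)+1) ≠ 0 := by positivity
    field_simp
    ring
  rw [hd, hφ t htpos, hq, Real.rpow_neg hA.le]
  have hfx : f (φ t) ≠ 0 := (hfpos (φ t) hx).ne'
  have hAq : (((k:ℝ)+1) * F (φ t)) ^ ((k:ℝ)/((k:ℝ)+1)) ≠ 0 :=
    (Real.rpow_pos_of_pos hA _).ne'
  field_simp
end

section
/- Let h ∈ C²(ℝ) and g ∈ C²(Ω) for Ω ⊆ ℝⁿ open. Then at each point of Ω, S_k(D²(h∘g)) = (h'(g))^{k−1} h''(g) · Σ_{i,j} S_k^{ij}(D²g) g_i g_j + (h'(g))^k S_k(D²g), where S_k^{ij}(A) = ∂S_k/∂A_{ij} and S_k is the k-th elementary symmetric function of the eigenvalues. -/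
open Finset Matrix Set

lemma update_eq_updateRow {ι : Type*} [Fintype ι] [DecidableEq ι]
    (M : Matrix ι ι ℝ) (p : ι) (v : ι → ℝ) :
    Function.update M p v = M.updateRow p v := by
  ext i j
  by_cases hi : i = p
  · subst hi; simp [Function.update_apply]
    exact congrFun (Function.update_self _ _ _) j
  · simp [hi, Function.update_of_ne hi]
    exact congrFun (Function.update_of_ne hi _ _) j

lemma det_smul_add_vecMulVec {ι : Type*} [Fintype ι] [DecidableEq ι]
    (a : ℝ) (M : Matrix ι ι ℝ) (u v : ι → ℝ) :
    (a • M + Matrix.vecMulVec u v).det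
      = a ^ (Fintype.card ι) * M.det
        + a ^ (Fintype.card ι - 1) * ∑ p, u p * (M.updateRow p v).det := by
  classical
  set f := (Matrix.detRowAlternating : (ι → ℝ) [⋀^ι]→ₗ[ℝ] ℝ) with hf
  have hrows : a • M + Matrix.vecMulVec u v
      = (fun i => u i • v) + (fun i => a • M i) := by
    ext i j
    simp [Matrix.vecMulVec_apply, Matrix.add_apply, smul_eq_mul, mul_comm]
    ring
  have hdet : (a • M + Matrix.vecMulVec u v).det
      = f.toMultilinearMap ((fun i => u i • v) + (fun i => a • M i)) := by
    rw [hrows]; rfl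
  rw [hdet, MultilinearMap.map_add_univ]
  have hterm : ∀ s : Finset ι,
      f.toMultilinearMap (s.piecewise (fun i => u i • v) (fun i => a • M i))
        = (if s = ∅ then a ^ (Fintype.card ι) * M.det else 0)
          + ∑ p, (if s = {p} then a ^ (Fintype.card ι - 1) * (u p * (M.updateRow p v).det) else 0) := by
    intro s
    rcases Nat.lt_or_ge s.card 2 with hc | hc
    · interval_cases hcard : s.card
      · -- card = 0
        have hs : s = ∅ := Finset.card_eq_zero.mp hcard
        subst hs
        rw [Finset.piecewise_empty]
        have : f.toMultilinearMap (fun i => a • M i)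
            = (∏ _i : ι, a) • f.toMultilinearMap M :=
          f.toMultilinearMap.map_smul_univ (fun _ => a) M
        rw [this]
        rw [if_pos rfl]
        rw [Finset.sum_eq_zero (fun p _ => if_neg (Ne.symm (Finset.singleton_ne_empty p)))]
        simp [Finset.prod_const, smul_eq_mul]
        exact Or.inl rfl
      · -- card = 1
        obtain ⟨p, hp⟩ := Finset.card_eq_one.mp hcard
        subst hp
        rw [Finset.piecewise_singleton]
        rw [show (u p • v) = (u p • v) from rfl]
        have h1 : f.toMultilinearMap (Function.update (fun i => a • M i) p (u p • v))
            = u p • f.toMultilinearMap (Function.update (fun i => a • M i) p v) :=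
          f.toMultilinearMap.map_update_smul _ p (u p) v
        have h2 : Function.update (fun i => a • M i) p v
            = fun i => (if i = p then (1:ℝ) else a) • (M.updateRow p v) i := by
          funext i
          by_cases hi : i = p
          · subst hi; simp
          · simp [hi, Function.update_of_ne hi]
        have h3 : f.toMultilinearMap (fun i => (if i = p then (1:ℝ) else a) • (M.updateRow p v) i)
            = (∏ i : ι, if i = p then (1:ℝ) else a) • f.toMultilinearMap (M.updateRow p v) :=
          f.toMultilinearMap.map_smul_univ _ _
        have h4 : (∏ i : ι, if i = p then (1:ℝ) else a) = a ^ (Fintype.card ι - 1) := by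
          rw [← Finset.mul_prod_erase Finset.univ _ (Finset.mem_univ p)]
          rw [if_pos rfl, one_mul]
          rw [Finset.prod_congr rfl (fun i hi => if_neg (Finset.ne_of_mem_erase hi))]
          rw [Finset.prod_const, Finset.card_erase_of_mem (Finset.mem_univ p), Finset.card_univ]
        rw [h1, h2, h3, h4]
        have h5 : ∀ q : ι, (({p} : Finset ι) = {q}) ↔ p = q := by
          intro q; simp [Finset.singleton_injective.eq_iff]
        rw [if_neg (Finset.singleton_ne_empty p), zero_add]
        rw [Finset.sum_eq_single p
          (fun q _ hq => if_neg (fun hc => hq ((h5 q).mp hc).symm))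
          (fun hp => absurd (Finset.mem_univ p) hp)]
        rw [if_pos rfl]
        simp [smul_eq_mul]
        rw [mul_left_comm]; rfl
    · -- card ≥ 2
      obtain ⟨p, hp, q, hq, hpq⟩ := Finset.one_lt_card.mp hc
      have hne : s ≠ ∅ := by
        intro hs; rw [hs] at hp; exact absurd hp (Finset.notMem_empty p)
      have hns : ∀ r : ι, s ≠ {r} := by
        intro r hs
        rw [hs, Finset.card_singleton] at hc; omega
      rw [if_neg hne, Finset.sum_congr rfl (fun r _ => if_neg (hns r))]
      simp only [Finset.sum_const_zero, zero_add]
      set m0 : ι → (ι → ℝ) := s.piecewise (fun _ => v) (fun i => a • M i) with hm0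
      have heq : s.piecewise (fun i => u i • v) (fun i => a • M i)
          = s.piecewise (fun i => u i • m0 i) m0 := by
        funext i
        by_cases hi : i ∈ s
        · rw [Finset.piecewise_eq_of_mem _ _ _ hi, Finset.piecewise_eq_of_mem _ _ _ hi,
            hm0, Finset.piecewise_eq_of_mem _ _ _ hi]
        · rw [Finset.piecewise_eq_of_notMem _ _ _ hi, Finset.piecewise_eq_of_notMem _ _ _ hi,
            hm0, Finset.piecewise_eq_of_notMem _ _ _ hi]
      rw [heq, f.toMultilinearMap.map_piecewise_smul]
      have : f m0 = 0 := f.map_eq_zero_of_eq m0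
        (by rw [hm0, Finset.piecewise_eq_of_mem _ _ _ hp, Finset.piecewise_eq_of_mem _ _ _ hq]) hpq
      rw [show f.toMultilinearMap m0 = f m0 from rfl, this, smul_zero]
  rw [Finset.sum_congr rfl (fun s _ => hterm s)]
  rw [Finset.sum_add_distrib]
  congr 1
  · simp
  · rw [Finset.sum_comm]
    rw [Finset.sum_congr rfl (fun p _ => Finset.sum_ite_eq' Finset.univ ({p} : Finset ι) _)]
    simp [Finset.mul_sum]

lemma det_updateRow_linear {ι : Type*} [Fintype ι] [DecidableEq ι]
    {α : Type*} [Fintype α] (M : Matrix ι ι ℝ) (p : ι) (c : α → ℝ) (row : α → ι → ℝ) :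
    (M.updateRow p (∑ j, c j • row j)).det = ∑ j, c j * (M.updateRow p (row j)).det := by
  classical
  have h : ∀ v : ι → ℝ, (M.updateRow p v).det
      = (Matrix.detRowAlternating : (ι → ℝ) [⋀^ι]→ₗ[ℝ] ℝ).toMultilinearMap (Function.update M p v) := by
    intro v
    rw [update_eq_updateRow]; rfl
  rw [h]; erw [MultilinearMap.map_update_sum]
  refine Finset.sum_congr rfl (fun j _ => ?_)
  erw [MultilinearMap.map_update_smul, ← h, smul_eq_mul]
lemma Sk_combo (n k : ℕ) (hk : 1 ≤ k)
    (Sk : Matrix (Fin n) (Fin n) ℝ → ℝ)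
    (hSk : ∀ A : Matrix (Fin n) (Fin n) ℝ,
      Sk A = ∑ s ∈ (Finset.univ : Finset (Fin n)).powersetCard k,
        (A.submatrix (fun i : {x // x ∈ s} => (i : Fin n))
                     (fun j : {x // x ∈ s} => (j : Fin n))).det)
    (B : Matrix (Fin n) (Fin n) ℝ) (a b : ℝ) (w : Fin n → ℝ) :
    Sk (a • B + b • Matrix.vecMulVec w w)
      = a ^ (k - 1) * b *
        (∑ i, ∑ j, (deriv (fun t : ℝ => Sk (B + t • Matrix.single i j 1)) 0) * w i * w j)
      + a ^ k * Sk B := by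
  classical
  -- notation
  set S := (Finset.univ : Finset (Fin n)).powersetCard k with hS
  have hcard : ∀ s ∈ S, Fintype.card {x // x ∈ s} = k := by
    intro s hs
    rw [Fintype.card_coe]
    exact (Finset.mem_powersetCard.mp hs).2
  -- submatrix of B
  set Bs : (s : Finset (Fin n)) → Matrix {x // x ∈ s} {x // x ∈ s} ℝ :=
    fun s => B.submatrix (fun i : {x // x ∈ s} => (i : Fin n)) (fun j : {x // x ∈ s} => (j : Fin n)) with hBs
  -- the coefficient c s i j
  set c : Finset (Fin n) → Fin n → Fin n → ℝ := fun s i j =>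
    ∑ p : {x // x ∈ s}, (Pi.single i 1 : Fin n → ℝ) (p : Fin n) *
      ((Bs s).updateRow p (fun q => (Pi.single j 1 : Fin n → ℝ) (q : Fin n))).det with hc
  -- derivative computation
  have hderiv : ∀ i j : Fin n,
      deriv (fun t : ℝ => Sk (B + t • Matrix.single i j 1)) 0 = ∑ s ∈ S, c s i j := by
    intro i j
    have haff : ∀ t : ℝ, Sk (B + t • Matrix.single i j 1) = Sk B + t * ∑ s ∈ S, c s i j := by
      intro t
      rw [hSk, hSk, Finset.mul_sum, ← Finset.sum_add_distrib]
      refine Finset.sum_congr rfl (fun s hs => ?_)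
      have hsub : (B + t • Matrix.single i j 1).submatrix
            (fun p : {x // x ∈ s} => (p : Fin n)) (fun q : {x // x ∈ s} => (q : Fin n))
          = (1:ℝ) • (Bs s) + Matrix.vecMulVec (fun p : {x // x ∈ s} => t * (Pi.single i 1 : Fin n → ℝ) (p : Fin n))
              (fun q : {x // x ∈ s} => (Pi.single j 1 : Fin n → ℝ) (q : Fin n)) := by
        ext p q
        simp only [Matrix.submatrix_apply, Matrix.add_apply, Matrix.smul_apply,
          Matrix.vecMulVec_apply, hBs, one_smul, smul_eq_mul, Matrix.single,
          Matrix.of_apply, Pi.single_apply]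
        by_cases h1 : i = (p : Fin n) <;> by_cases h2 : j = (q : Fin n) <;>
          simp [h1, h2, eq_comm] <;> ring
      rw [hsub, det_smul_add_vecMulVec, hcard s hs, one_pow, one_pow, one_mul, one_mul]
      congr 1
      rw [hc, Finset.mul_sum]
      refine Finset.sum_congr rfl (fun p _ => by ring)
    have : (fun t : ℝ => Sk (B + t • Matrix.single i j 1))
        = fun t => Sk B + t * ∑ s ∈ S, c s i j := funext haff
    rw [this]
    have := ((hasDerivAt_mul_const (∑ s ∈ S, c s i j)).const_add (Sk B) (x := (0:ℝ)))
    exact this.deriv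
  -- main computation
  rw [hSk]
  have hmain : ∀ s ∈ S,
      ((a • B + b • Matrix.vecMulVec w w).submatrix
        (fun p : {x // x ∈ s} => (p : Fin n)) (fun q : {x // x ∈ s} => (q : Fin n))).det
      = a ^ (k-1) * b * (∑ i, ∑ j, c s i j * w i * w j) + a ^ k * (Bs s).det := by
    intro s hs
    have hsub : (a • B + b • Matrix.vecMulVec w w).submatrix
          (fun p : {x // x ∈ s} => (p : Fin n)) (fun q : {x // x ∈ s} => (q : Fin n))
        = a • (Bs s) + Matrix.vecMulVec (fun p : {x // x ∈ s} => b * w (p : Fin n))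
            (fun q : {x // x ∈ s} => w (q : Fin n)) := by
      ext p q
      simp only [Matrix.submatrix_apply, Matrix.add_apply, Matrix.smul_apply,
        Matrix.vecMulVec_apply, hBs, smul_eq_mul]
      ring
    rw [hsub, det_smul_add_vecMulVec, hcard s hs]
    rw [add_comm (a ^ k * (Bs s).det)]
    congr 1
    -- a^(k-1) * ∑ p, (b * w p) * det(updateRow (Bs s) p (w ∘ coe)) = a^(k-1) * b * ∑ i ∑ j c s i j * w i * w j
    have hrow : ∀ p : {x // x ∈ s},
        ((Bs s).updateRow p (fun q : {x // x ∈ s} => w (q : Fin n))).det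
          = ∑ j, w j * ((Bs s).updateRow p (fun q : {x // x ∈ s} => (Pi.single j 1 : Fin n → ℝ) (q : Fin n))).det := by
      intro p
      rw [show (fun q : {x // x ∈ s} => w (q : Fin n))
          = ∑ j, w j • (fun q : {x // x ∈ s} => (Pi.single j 1 : Fin n → ℝ) (q : Fin n)) by
        funext q
        simp [Pi.single_apply]]
      exact det_updateRow_linear _ _ _ _
    set d : {x // x ∈ s} → Fin n → ℝ := fun p j =>
      ((Bs s).updateRow p (fun q : {x // x ∈ s} => (Pi.single j 1 : Fin n → ℝ) (q : Fin n))).det with hd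
    have hswap : (∑ i, ∑ j, c s i j * w i * w j)
        = ∑ p : {x // x ∈ s}, w (p : Fin n) *
            ((Bs s).updateRow p (fun q : {x // x ∈ s} => w (q : Fin n))).det :=
      calc (∑ i, ∑ j, c s i j * w i * w j)
          = ∑ i, ∑ j, ∑ p : {x // x ∈ s},
              (Pi.single i 1 : Fin n → ℝ) (p : Fin n) * d p j * w i * w j := by
            simp only [hc, hd, Finset.sum_mul]
        _ = ∑ j, ∑ p : {x // x ∈ s}, ∑ i,
              (Pi.single i 1 : Fin n → ℝ) (p : Fin n) * d p j * w i * w j := by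
            rw [Finset.sum_comm]
            exact Finset.sum_congr rfl fun j _ => Finset.sum_comm
        _ = ∑ j, ∑ p : {x // x ∈ s}, w (p : Fin n) * (w j * d p j) := by
            refine Finset.sum_congr rfl fun j _ => Finset.sum_congr rfl fun p _ => ?_
            rw [Finset.sum_eq_single ((p : Fin n))
              (fun i _ hi => by rw [Pi.single_eq_of_ne (Ne.symm hi)]; ring)
              (fun hp => absurd (Finset.mem_univ _) hp)]
            rw [Pi.single_eq_same]; ring
        _ = ∑ p : {x // x ∈ s}, ∑ j, w (p : Fin n) * (w j * d p j) := Finset.sum_comm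
        _ = ∑ p : {x // x ∈ s}, w (p : Fin n) *
              ((Bs s).updateRow p (fun q : {x // x ∈ s} => w (q : Fin n))).det := by
            refine Finset.sum_congr rfl fun p _ => ?_
            rw [hrow p, Finset.mul_sum]
    rw [hswap, Finset.mul_sum, Finset.mul_sum]
    exact Finset.sum_congr rfl fun p _ => by ring
  rw [Finset.sum_congr rfl hmain, Finset.sum_add_distrib]
  congr 1
  · simp only [hderiv]
    rw [← Finset.mul_sum]
    congr 1
    calc ∑ s ∈ S, ∑ i, ∑ j, c s i j * w i * w j
        = ∑ i, ∑ s ∈ S, ∑ j, c s i j * w i * w j := Finset.sum_comm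
      _ = ∑ i, ∑ j, ∑ s ∈ S, c s i j * w i * w j := Finset.sum_congr rfl fun i _ => Finset.sum_comm
      _ = ∑ i, ∑ j, (∑ s ∈ S, c s i j) * w i * w j := by
          refine Finset.sum_congr rfl fun i _ => Finset.sum_congr rfl fun j _ => ?_
          rw [Finset.sum_mul, Finset.sum_mul]
  · rw [← Finset.mul_sum, hSk]

lemma hessian_comp (n : ℕ) (Ω : Set (Fin n → ℝ)) (hΩ : IsOpen Ω)
    (h : ℝ → ℝ) (hh : ContDiff ℝ 2 h)
    (g : (Fin n → ℝ) → ℝ) (hg : ContDiffOn ℝ 2 g Ω)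
    (D2 : ((Fin n → ℝ) → ℝ) → (Fin n → ℝ) → Matrix (Fin n) (Fin n) ℝ)
    (hD2 : ∀ u x i j, D2 u x i j =
      fderiv ℝ (fun y => fderiv ℝ u y (Pi.single j 1)) x (Pi.single i 1))
    (x : Fin n → ℝ) (hx : x ∈ Ω) (i j : Fin n) :
    D2 (h ∘ g) x i j =
      deriv (deriv h) (g x) * (fderiv ℝ g x (Pi.single i 1) * fderiv ℝ g x (Pi.single j 1))
      + deriv h (g x) * D2 g x i j := by
  classical
  have hh1 : ContDiff ℝ 1 (deriv h) := by
    have := (contDiff_succ_iff_deriv (n := 1)).mp (by exact_mod_cast hh)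
    exact this.2.2
  have hgd : ∀ y ∈ Ω, DifferentiableAt ℝ g y := fun y hy =>
    (hg.contDiffAt (hΩ.mem_nhds hy)).differentiableAt (by norm_num)
  have hφ : (fun y => fderiv ℝ (h ∘ g) y (Pi.single j 1))
      =ᶠ[nhds x] (fun y => deriv h (g y) * fderiv ℝ g y (Pi.single j 1)) := by
    filter_upwards [hΩ.mem_nhds hx] with y hy
    have h1 : HasFDerivAt g (fderiv ℝ g y) y := (hgd y hy).hasFDerivAt
    have h2 : HasDerivAt h (deriv h (g y)) (g y) :=
      ((hh.differentiable (by norm_num)) (g y)).hasDerivAt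
    have h3 : HasFDerivAt (h ∘ g) (deriv h (g y) • fderiv ℝ g y) y :=
      h2.comp_hasFDerivAt y h1
    rw [h3.fderiv]
    simp [ContinuousLinearMap.smul_apply, smul_eq_mul]
  rw [hD2, hφ.fderiv_eq]
  -- derivative of fderiv g applied to e_j
  have hf' : ContDiffOn ℝ 1 (fderiv ℝ g) Ω := hg.fderiv_of_isOpen hΩ (by norm_num)
  have hfd : DifferentiableAt ℝ (fderiv ℝ g) x :=
    ((hf'.differentiableOn (by norm_num)) x hx).differentiableAt (hΩ.mem_nhds hx)
  have hψ : DifferentiableAt ℝ (fun y => fderiv ℝ g y (Pi.single j 1)) x := by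
    have := (ContinuousLinearMap.apply ℝ ℝ (Pi.single j 1 : Fin n → ℝ)).differentiableAt.comp x hfd
    exact this
  have hA : HasFDerivAt (fun y => deriv h (g y))
      (deriv (deriv h) (g x) • fderiv ℝ g x) x := by
    have h2 : HasDerivAt (deriv h) (deriv (deriv h) (g x)) (g x) :=
      ((hh1.differentiable (by norm_num)) (g x)).hasDerivAt
    exact h2.comp_hasFDerivAt x (hgd x hx).hasFDerivAt
  have hprod := fderiv_fun_mul (𝕜 := ℝ) hA.differentiableAt hψ
  rw [hprod]
  simp only [ContinuousLinearMap.add_apply, ContinuousLinearMap.smul_apply, smul_eq_mul]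
  rw [hA.fderiv, hD2]
  simp only [ContinuousLinearMap.smul_apply, smul_eq_mul]
  ring

theorem stmt13 (n k : ℕ) (hn : 1 ≤ n) (hk : 1 ≤ k) (hkn : k ≤ n)
    (Ω : Set (Fin n → ℝ)) (hΩ : IsOpen Ω)
    (h : ℝ → ℝ) (hh : ContDiff ℝ 2 h)
    (g : (Fin n → ℝ) → ℝ) (hg : ContDiffOn ℝ 2 g Ω)
    (Sk : Matrix (Fin n) (Fin n) ℝ → ℝ)
    (hSk : ∀ A : Matrix (Fin n) (Fin n) ℝ,
      Sk A = ∑ s ∈ (Finset.univ : Finset (Fin n)).powersetCard k,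
        (A.submatrix (fun i : {x // x ∈ s} => (i : Fin n))
                     (fun j : {x // x ∈ s} => (j : Fin n))).det)
    (D2 : ((Fin n → ℝ) → ℝ) → (Fin n → ℝ) → Matrix (Fin n) (Fin n) ℝ)
    (hD2 : ∀ u x i j, D2 u x i j =
      fderiv ℝ (fun y => fderiv ℝ u y (Pi.single j 1)) x (Pi.single i 1))
    (x : Fin n → ℝ) (hx : x ∈ Ω) :
    Sk (D2 (h ∘ g) x) =
      (deriv h (g x)) ^ (k - 1) * deriv (deriv h) (g x) *
        (∑ i, ∑ j,
          (deriv (fun t : ℝ => Sk (D2 g x + t • Matrix.single i j 1)) 0) *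
            (fderiv ℝ g x (Pi.single i 1)) * (fderiv ℝ g x (Pi.single j 1)))
      + (deriv h (g x)) ^ k * Sk (D2 g x) := by
  classical
  have hmat : D2 (h ∘ g) x = deriv h (g x) • D2 g x
      + deriv (deriv h) (g x) • Matrix.vecMulVec
          (fun i => fderiv ℝ g x (Pi.single i 1)) (fun i => fderiv ℝ g x (Pi.single i 1)) := by
    ext i j
    rw [hessian_comp n Ω hΩ h hh g hg D2 hD2 x hx i j]
    simp only [Matrix.add_apply, Matrix.smul_apply, Matrix.vecMulVec_apply, smul_eq_mul]
    ring
  rw [hmat, Sk_combo n k hk Sk hSk (D2 g x) (deriv h (g x)) (deriv (deriv h) (g x))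
    (fun i => fderiv ℝ g x (Pi.single i 1))]
end
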